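/- There exists a finite set S of size 3, an element s₀ ∈ S, and a function g : S × Fin 3 → S × Fin 3 such that the position component of g^[n](s₀, 0) equals 0 if n ≡ 0 (mod 4), equals 1 if n ≡ 1 or 3 (mod 4), and equals 2 if n ≡ 2 (mod 4) for all n ∈ ℕ; but there is no function h : Fin 3 → Fin 3 such that h^[n](0) equals 0 if n ≡ 0 (mod 4), equals 1 if n ≡ 1 or 3 (mod 4), and equals 2 if n ≡ 2 (mod 4) for all n ∈ ℕ. -/
import Mathlib


/-- The required period-4 position pattern C, C', C'', C', C, … of the Oscillating
Configurations problem, as a predicate on (time, position). -/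
def oscSpec (n : ℕ) (p : Fin 3) : Prop :=
  (n % 4 = 0 → p = 0) ∧ ((n % 4 = 1 ∨ n % 4 = 3) → p = 1) ∧ (n % 4 = 2 → p = 2)

/-- The transition function with memory. -/
def oscG : Fin 3 × Fin 3 → Fin 3 × Fin 3
  | (0, 0) => (0, 1)
  | (0, 1) => (0, 2)
  | (0, 2) => (1, 1)
  | (1, 1) => (0, 0)
  | x => x

/-- The orbit values indexed by phase. -/
def oscF : ℕ → Fin 3 × Fin 3
  | 0 => (0, 0)
  | 1 => (0, 1)
  | 2 => (0, 2)
  | _ => (1, 1)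

lemma oscG_iter (n : ℕ) : oscG^[n] ((0 : Fin 3), (0 : Fin 3)) = oscF (n % 4) := by
  induction n with
  | zero => rfl
  | succ n ih =>
    rw [Function.iterate_succ_apply', ih]
    have h : n % 4 = 0 ∨ n % 4 = 1 ∨ n % 4 = 2 ∨ n % 4 = 3 := by omega
    rcases h with h | h | h | h <;>
      · have h' : (n + 1) % 4 = (n % 4 + 1) % 4 := by omega
        rw [h', h]
        rfl

/-- With a 3-element persistent internal memory the period-4 oscillation of positions
is realizable, but it is not realizable memorylessly (as iteration of a function of
the position alone). -/
theorem finite_memory_oscillation_vs_memoryless :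
    (∃ (S : Type) (_ : Fintype S), Fintype.card S = 3 ∧
      ∃ (s₀ : S) (g : S × Fin 3 → S × Fin 3),
        ∀ n : ℕ, oscSpec n ((g^[n] (s₀, (0 : Fin 3))).2)) ∧
    ¬ ∃ h : Fin 3 → Fin 3, ∀ n : ℕ, oscSpec n (h^[n] 0) := by
  constructor
  · refine ⟨Fin 3, inferInstance, rfl, 0, oscG, fun n => ?_⟩
    rw [oscG_iter]
    have h : n % 4 = 0 ∨ n % 4 = 1 ∨ n % 4 = 2 ∨ n % 4 = 3 := by omega
    rcases h with h | h | h | h <;> rw [h] <;>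
      exact ⟨fun h1 => by simp_all [oscF], fun h1 => by
        rcases h1 with h1 | h1 <;> simp_all [oscF], fun h1 => by simp_all [oscF]⟩
  · rintro ⟨h, hspec⟩
    have h1 : h^[1] 0 = 1 := (hspec 1).2.1 (Or.inl rfl)
    have h2 : h^[2] 0 = 2 := (hspec 2).2.2 rfl
    have h3 : h^[3] 0 = 1 := (hspec 3).2.1 (Or.inr rfl)
    have h4 : h^[4] 0 = 0 := (hspec 4).1 rfl
    have e2 : h 1 = 2 := by
      rw [← h1]; exact h2
    have e3 : h 2 = 1 := by
      rw [← h2]; exact h3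
    have e4 : h 1 = 0 := by
      rw [← h3]; exact h4
    rw [e2] at e4
    exact absurd e4 (by decide)
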